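/- Let r, s ≥ 1, n = rs, and consider the partition of {1,…,n} into the r blocks Δ_i = {i, i+r, i+2r, …, i+(s−1)r} for i = 1,…,r. Let τ = (1 2 … n) ∈ S_n be the standard n-cycle, and let σ ∈ S_n be any permutation with σ(Δ_i) = Δ_i for all i. For each i, let σ_i ∈ S_s be the permutation induced by σ on Δ_i under the order-preserving bijection of Δ_i with {1,…,s}, and let ρ = (1 2 … s) ∈ S_s. Then: (a) (στ)^r preserves each block Δ_i, and the permutation it induces on Δ_1 (under the same identification) equals the product σ_1σ_2⋯σ_r·ρ (composing left to right); and (b) στ is an n-cycle if and only if σ_1σ_2⋯σ_r·ρ is an s-cycle in S_s. -/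

import Mathlib

/-- The order-preserving identification of the block `Δ_{i+1} = {i, i+r, …, i+(s-1)r}`
(0-indexed points `ZMod (r*s)`) with `ZMod s`: position `k` corresponds to the point
`i + k*r`. -/
def blockEmb (r s : ℕ) (i : Fin r) (k : ZMod s) : ZMod (r * s) :=
  (((i : ℕ) + k.val * r : ℕ) : ZMod (r * s))

/-- A permutation is a full cycle iff the cyclic group it generates acts transitively;
on a finite set of `n` points this says precisely that it is an `n`-cycle. -/
def IsFullCycle {α : Type*} (g : Equiv.Perm α) : Prop :=
  ∀ x y : α, ∃ m : ℤ, (g ^ m) x = y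

/-- The left-to-right product `σ_1 σ_2 ⋯ σ_r` of a tuple of permutations
(apply `σ_1` first). -/
def lrProd {α : Type*} {r : ℕ} (σ : Fin r → Equiv.Perm α) : Equiv.Perm α :=
  (List.ofFn σ).reverse.prod

open scoped Fin.NatCast Fin.CommRing

namespace Stmt8Aux

def stepFun {α : Type*} {r : ℕ} (σi : Fin r → Equiv.Perm α) (ρ : Equiv.Perm α) (i : Fin r) :
    Equiv.Perm α :=
  if (i : ℕ) + 1 = r then (σi i).trans ρ else σi i

def Qaux {α : Type*} {r : ℕ} [NeZero r] (step : Fin r → Equiv.Perm α) :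
    ℕ → Fin r → Equiv.Perm α
  | 0, _ => Equiv.refl α
  | m+1, i => (step i).trans (Qaux step m (i+1))

lemma lrProd_succ {α : Type*} {m : ℕ} (f : Fin (m+1) → Equiv.Perm α) :
    lrProd f = (f 0).trans (lrProd fun j : Fin m => f j.succ) := by
  unfold lrProd
  rw [List.ofFn_succ, List.reverse_cons, List.prod_append, List.prod_singleton]
  rfl

lemma lrProd_succ' {α : Type*} {m : ℕ} (f : Fin (m+1) → Equiv.Perm α) :
    lrProd f = (lrProd fun j : Fin m => f j.castSucc).trans (f (Fin.last m)) := by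
  unfold lrProd
  rw [List.ofFn_succ', List.concat_eq_append, List.reverse_append, List.reverse_singleton,
    List.singleton_append, List.prod_cons]
  exact Equiv.Perm.mul_def _ _

lemma Qaux_add {α : Type*} {r : ℕ} [NeZero r] (step : Fin r → Equiv.Perm α)
    (a b : ℕ) (i : Fin r) :
    Qaux step (a + b) i = (Qaux step a i).trans (Qaux step b (i + (a : Fin r))) := by
  induction a generalizing i with
  | zero =>
      simp only [Nat.zero_add, Nat.cast_zero, add_zero]
      exact (Equiv.refl_trans _).symm
  | succ a ih =>
      rw [show a + 1 + b = (a + b) + 1 from by omega]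
      show (step i).trans (Qaux step (a + b) (i+1)) = _
      rw [ih]
      have : (i + 1) + (a : Fin r) = i + ((a+1 : ℕ) : Fin r) := by push_cast; ring
      rw [this]
      show _ = ((step i).trans (Qaux step a (i+1))).trans _
      rw [Equiv.trans_assoc]

lemma Qaux_eq_lrProd {α : Type*} {r : ℕ} [NeZero r] (step : Fin r → Equiv.Perm α)
    (m : ℕ) (i : Fin r) :
    Qaux step m i = lrProd (fun j : Fin m => step (i + ((j : ℕ) : Fin r))) := by
  induction m generalizing i with
  | zero =>
      show Equiv.refl α = _
      unfold lrProd
      simp [Equiv.Perm.one_def]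
  | succ m ih =>
      rw [lrProd_succ]
      show (step i).trans (Qaux step m (i+1)) = _
      rw [ih]
      congr 1
      · simp
      · apply congrArg lrProd
        funext j
        congr 1
        rw [Fin.val_succ]
        push_cast
        ring

lemma step_lrProd {α : Type*} {m : ℕ} (σi : Fin (m+1) → Equiv.Perm α) (ρ : Equiv.Perm α) :
    lrProd (stepFun σi ρ) = (lrProd σi).trans ρ := by
  rw [lrProd_succ' (stepFun σi ρ), lrProd_succ' σi]
  have h1 : (fun j : Fin m => stepFun σi ρ j.castSucc) = (fun j : Fin m => σi j.castSucc) := by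
    funext j
    unfold stepFun
    rw [if_neg]
    rw [Fin.coe_castSucc]
    omega
  have h2 : stepFun σi ρ (Fin.last m) = (σi (Fin.last m)).trans ρ := by
    unfold stepFun
    rw [if_pos]
    rw [Fin.val_last]
  rw [h1, h2, Equiv.trans_assoc]

lemma conj_pow {α : Type*} (p u v : Equiv.Perm α) (hc : ∀ x, u (p x) = p (v x)) :
    ∀ (q : ℕ) (x : α), (u ^ q) (p x) = p ((v ^ q) x) := by
  intro q
  induction q with
  | zero => simp
  | succ q ih =>
      intro x
      rw [pow_succ, pow_succ, Equiv.Perm.mul_apply, Equiv.Perm.mul_apply, hc, ih]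

lemma isFullCycle_iff_nat {α : Type*} [Finite α] (g : Equiv.Perm α) :
    IsFullCycle g ↔ ∀ x y : α, ∃ m : ℕ, (g ^ m) x = y := by
  constructor
  · intro hf x y
    obtain ⟨m, hm⟩ := hf x y
    have hd : 0 < orderOf g := orderOf_pos g
    refine ⟨(m % (orderOf g : ℤ)).toNat, ?_⟩
    have hnn : 0 ≤ m % (orderOf g : ℤ) := Int.emod_nonneg m (by exact_mod_cast hd.ne')
    have : g ^ ((m % (orderOf g : ℤ)).toNat) = g ^ m := by
      rw [← zpow_natCast, Int.toNat_of_nonneg hnn, zpow_mod_orderOf]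
    rw [this]; exact hm
  · intro hf x y
    obtain ⟨m, hm⟩ := hf x y
    exact ⟨m, by rw [zpow_natCast]; exact hm⟩

lemma blockEmb_lt {r s : ℕ} [NeZero r] [NeZero s] (j : Fin r) (c : ZMod s) :
    (j : ℕ) + c.val * r < r * s := by
  have h1 := j.isLt
  have h2 := ZMod.val_lt c
  nlinarith

lemma blockEmb_inj {r s : ℕ} [NeZero r] [NeZero s] {i i' : Fin r} {k k' : ZMod s}
    (h : blockEmb r s i k = blockEmb r s i' k') : i = i' ∧ k = k' := by
  haveI : NeZero (r * s) := ⟨Nat.mul_ne_zero (NeZero.ne r) (NeZero.ne s)⟩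
  unfold blockEmb at h
  apply_fun ZMod.val at h
  rw [ZMod.val_cast_of_lt (blockEmb_lt i k), ZMod.val_cast_of_lt (blockEmb_lt i' k')] at h
  have h1 : (i : ℕ) = (i' : ℕ) := by
    have e1 : ((i : ℕ) + k.val * r) % r = (i : ℕ) % r := Nat.add_mul_mod_self_right _ _ _
    have e2 : ((i' : ℕ) + k'.val * r) % r = (i' : ℕ) % r := Nat.add_mul_mod_self_right _ _ _
    rw [Nat.mod_eq_of_lt i.isLt] at e1
    rw [Nat.mod_eq_of_lt i'.isLt] at e2
    rw [← e1, ← e2, h]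
  have h2 : k.val = k'.val := by
    have : k.val * r = k'.val * r := by omega
    exact Nat.eq_of_mul_eq_mul_right (Nat.pos_of_ne_zero (NeZero.ne r)) this
  exact ⟨Fin.ext h1, ZMod.val_injective s h2⟩

lemma blockEmb_surj {r s : ℕ} [NeZero r] [NeZero s] (x : ZMod (r * s)) :
    ∃ (i : Fin r) (k : ZMod s), blockEmb r s i k = x := by
  haveI : NeZero (r * s) := ⟨Nat.mul_ne_zero (NeZero.ne r) (NeZero.ne s)⟩
  have hr : 0 < r := Nat.pos_of_ne_zero (NeZero.ne r)
  refine ⟨⟨x.val % r, Nat.mod_lt _ hr⟩, ((x.val / r : ℕ) : ZMod s), ?_⟩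
  unfold blockEmb
  have hk : ((x.val / r : ℕ) : ZMod s).val = x.val / r := by
    rw [ZMod.val_natCast]
    apply Nat.mod_eq_of_lt
    rw [Nat.div_lt_iff_lt_mul hr]
    have := ZMod.val_lt x
    rw [Nat.mul_comm s r]
    exact this
  show ((x.val % r + ((x.val / r : ℕ) : ZMod s).val * r : ℕ) : ZMod (r*s)) = x
  rw [hk, Nat.mod_add_div']
  exact ZMod.natCast_rightInverse x

end Stmt8Aux

open Stmt8Aux in
/-- Let `n = rs`, `τ = (1 2 … n)` (i.e. `x ↦ x + 1` on 0-indexed points),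
and let `σ` preserve each block `Δ_i`, inducing `σ_i` on `Δ_i`. Then `(στ)^r`
(products composed left to right, so `στ` is `x ↦ τ(σ(x))`) preserves each block,
induces `σ_1 σ_2 ⋯ σ_r ρ` on the first block, and `στ` is an `n`-cycle iff
`σ_1 σ_2 ⋯ σ_r ρ` is an `s`-cycle, where `ρ = (1 2 … s)`. -/
theorem stmt_8 (r s : ℕ) [NeZero r] [NeZero s]
    (σ : Equiv.Perm (ZMod (r * s)))
    (σi : Fin r → Equiv.Perm (ZMod s))
    (hσ : ∀ (i : Fin r) (k : ZMod s), σ (blockEmb r s i k) = blockEmb r s i (σi i k)) :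
    (∀ (i : Fin r) (k : ZMod s), ∃ k' : ZMod s,
        ((σ.trans (Equiv.addRight (1 : ZMod (r * s)))) ^ r) (blockEmb r s i k)
          = blockEmb r s i k') ∧
    (∀ k : ZMod s,
        ((σ.trans (Equiv.addRight (1 : ZMod (r * s)))) ^ r) (blockEmb r s 0 k)
          = blockEmb r s 0 (((lrProd σi).trans (Equiv.addRight (1 : ZMod s))) k)) ∧
    (IsFullCycle (σ.trans (Equiv.addRight (1 : ZMod (r * s)))) ↔
      IsFullCycle ((lrProd σi).trans (Equiv.addRight (1 : ZMod s)))) := by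
  obtain ⟨r', rfl⟩ := Nat.exists_eq_succ_of_ne_zero (NeZero.ne r)
  haveI : NeZero ((r' + 1) * s) := ⟨Nat.mul_ne_zero (NeZero.ne _) (NeZero.ne s)⟩
  set ρ : Equiv.Perm (ZMod s) := Equiv.addRight (1 : ZMod s) with hρ
  set g : Equiv.Perm (ZMod ((r' + 1) * s)) :=
    σ.trans (Equiv.addRight (1 : ZMod ((r' + 1) * s))) with hg
  set step : Fin (r' + 1) → Equiv.Perm (ZMod s) := stepFun σi ρ with hstepdef
  have hvv : ∀ v : ZMod s, ((v.val : ℕ) : ZMod s) = v := fun v => ZMod.natCast_rightInverse v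
  -- arithmetic lemma
  have Bnat : ∀ (i : Fin (r' + 1)) (m : ℕ),
      (((i : ℕ) + m * (r' + 1) : ℕ) : ZMod ((r' + 1) * s)) = blockEmb (r' + 1) s i (m : ZMod s) := by
    intro i m
    unfold blockEmb
    rw [ZMod.val_natCast]
    have hsplit : (i : ℕ) + m * (r' + 1) =
        ((i : ℕ) + (m % s) * (r' + 1)) + ((r' + 1) * s) * (m / s) := by
      conv_lhs => rw [← Nat.div_add_mod m s]
      ring
    rw [hsplit, Nat.cast_add, Nat.cast_mul, ZMod.natCast_self, zero_mul, add_zero]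
  -- one step
  have keyA : ∀ (i : Fin (r' + 1)) (k : ZMod s),
      g (blockEmb (r' + 1) s i k) = blockEmb (r' + 1) s (i + 1) (step i k) := by
    intro i k
    have h0 : g (blockEmb (r' + 1) s i k) = blockEmb (r' + 1) s i (σi i k) + 1 := by
      rw [hg, Equiv.trans_apply, hσ]
      rfl
    have hb : blockEmb (r' + 1) s i (σi i k) + 1 =
        (((i : ℕ) + (σi i k).val * (r' + 1) + 1 : ℕ) : ZMod ((r' + 1) * s)) := by
      unfold blockEmb
      push_cast
      ring
    rw [h0, hb]
    by_cases hc : (i : ℕ) + 1 = r' + 1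
    · have hs : step i k = σi i k + 1 := by
        rw [hstepdef]
        unfold stepFun
        rw [if_pos hc]
        rfl
      have hi : i + 1 = (0 : Fin (r' + 1)) := by
        have h1 : ((((i : ℕ) + 1 : ℕ)) : Fin (r' + 1)) = (((r' + 1 : ℕ)) : Fin (r' + 1)) := by
          rw [hc]
        rwa [Nat.cast_add, Nat.cast_one, Fin.cast_val_eq_self, Fin.natCast_self] at h1
      have hnat : (i : ℕ) + (σi i k).val * (r' + 1) + 1 =
          ((0 : Fin (r' + 1)) : ℕ) + ((σi i k).val + 1) * (r' + 1) :=
        calc (i : ℕ) + (σi i k).val * (r' + 1) + 1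
            = (σi i k).val * (r' + 1) + ((i : ℕ) + 1) := by ring
          _ = (σi i k).val * (r' + 1) + (r' + 1) := by rw [hc]
          _ = ((0 : Fin (r' + 1)) : ℕ) + ((σi i k).val + 1) * (r' + 1) := by
              simp
              ring
      rw [hnat, Bnat 0 ((σi i k).val + 1), hi, hs]
      congr 1
      rw [Nat.cast_add, Nat.cast_one, hvv]
    · have hlt : (i : ℕ) + 1 < r' + 1 := by
        have := i.isLt
        omega
      have hs : step i k = σi i k := by
        rw [hstepdef]
        unfold stepFun
        rw [if_neg hc]
      have hi : ((i + 1 : Fin (r' + 1)) : ℕ) = (i : ℕ) + 1 := by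
        have h1 : (i + 1 : Fin (r' + 1)) = (((i : ℕ) + 1 : ℕ) : Fin (r' + 1)) := by
          rw [Nat.cast_add, Nat.cast_one, Fin.cast_val_eq_self]
        rw [h1, Fin.val_natCast, Nat.mod_eq_of_lt hlt]
      rw [hs]
      unfold blockEmb
      rw [hi]
      exact congrArg _ (by ring)
  -- m steps
  have keyC : ∀ (m : ℕ) (i : Fin (r' + 1)) (k : ZMod s),
      (g ^ m) (blockEmb (r' + 1) s i k)
        = blockEmb (r' + 1) s (i + (m : Fin (r' + 1))) (Qaux step m i k) := by
    intro m
    induction m with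
    | zero =>
        intro i k
        simp [Qaux]
    | succ m ih =>
        intro i k
        rw [pow_succ, Equiv.Perm.mul_apply, keyA, ih]
        have h1 : (i + 1) + (m : Fin (r' + 1)) = i + ((m + 1 : ℕ) : Fin (r' + 1)) := by
          push_cast
          ring
        rw [h1]
        rfl
  -- multiples of r steps
  have keyCq : ∀ (q : ℕ) (i : Fin (r' + 1)) (c : ZMod s),
      (g ^ ((r' + 1) * q)) (blockEmb (r' + 1) s i c)
        = blockEmb (r' + 1) s i ((Qaux step (r' + 1) i ^ q) c) := by
    intro q
    induction q with
    | zero =>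
        intro i c
        simp
    | succ q ih =>
        intro i c
        have hmu : (r' + 1) * (q + 1) = (r' + 1) * q + (r' + 1) := by ring
        rw [hmu, pow_add, Equiv.Perm.mul_apply, keyC (r' + 1) i c, Fin.natCast_self, add_zero, ih]
        have h2 : (Qaux step (r' + 1) i ^ (q + 1)) c
            = (Qaux step (r' + 1) i ^ q) (Qaux step (r' + 1) i c) := by
          rw [pow_succ, Equiv.Perm.mul_apply]
        rw [h2]
  -- the induced permutation on block 0
  have hQ : Qaux step (r' + 1) 0 = (lrProd σi).trans ρ := by
    rw [Qaux_eq_lrProd]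
    have hfun : (fun j : Fin (r' + 1) => step ((0 : Fin (r' + 1)) + ((j : ℕ) : Fin (r' + 1))))
        = step := by
      funext j
      rw [zero_add, Fin.cast_val_eq_self]
    rw [hfun, hstepdef]
    exact step_lrProd σi ρ
  refine ⟨?_, ?_, ?_⟩
  · intro i k
    refine ⟨Qaux step (r' + 1) i k, ?_⟩
    rw [keyC (r' + 1) i k, Fin.natCast_self, add_zero]
  · intro k
    rw [keyC (r' + 1) 0 k, Fin.natCast_self, add_zero, ← hQ]
  · rw [isFullCycle_iff_nat g, isFullCycle_iff_nat ((lrProd σi).trans ρ)]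
    constructor
    · intro hf k k'
      obtain ⟨n, hn⟩ := hf (blockEmb (r' + 1) s 0 k) (blockEmb (r' + 1) s 0 k')
      have hn' : (r' + 1) * (n / (r' + 1)) + n % (r' + 1) = n := Nat.div_add_mod n (r' + 1)
      rw [← hn', pow_add, Equiv.Perm.mul_apply, keyC (n % (r' + 1)) 0 k, zero_add,
        keyCq (n / (r' + 1))] at hn
      obtain ⟨hblock, hval⟩ := blockEmb_inj hn
      have ht : n % (r' + 1) = 0 := by
        have hd : (r' + 1) ∣ (n % (r' + 1)) := by
          rwa [← Fin.natCast_eq_zero]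
        exact Nat.eq_zero_of_dvd_of_lt hd (Nat.mod_lt n (by omega))

      rw [ht] at hval
      simp only [Nat.cast_zero] at hval
      rw [show Qaux step 0 (0 : Fin (r' + 1)) k = k from rfl, hQ] at hval
      exact ⟨n / (r' + 1), hval⟩
    · intro hf x y
      obtain ⟨i, k, rfl⟩ := blockEmb_surj x
      obtain ⟨i', k', rfl⟩ := blockEmb_surj y
      have hii : i + ((((r' + 1) - (i : ℕ)) : ℕ) : Fin (r' + 1)) = 0 := by
        have hilt := i.isLt
        have hcast : (((i : ℕ)) : Fin (r' + 1)) + ((((r' + 1) - (i : ℕ)) : ℕ) : Fin (r' + 1))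
            = ((((i : ℕ) + ((r' + 1) - (i : ℕ))) : ℕ) : Fin (r' + 1)) := (Nat.cast_add _ _).symm
        rw [Fin.cast_val_eq_self] at hcast
        rw [hcast, show (i : ℕ) + ((r' + 1) - (i : ℕ)) = r' + 1 from by omega, Fin.natCast_self]
      have h1 : (g ^ ((r' + 1) - (i : ℕ))) (blockEmb (r' + 1) s i k)
          = blockEmb (r' + 1) s 0 (Qaux step ((r' + 1) - (i : ℕ)) i k) := by
        rw [keyC, hii]
      have h2 : (g ^ ((i' : ℕ))) (blockEmb (r' + 1) s 0 (Qaux step ((r' + 1) - (i : ℕ)) i k))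
          = blockEmb (r' + 1) s i'
              ((Qaux step ((i' : ℕ)) 0) (Qaux step ((r' + 1) - (i : ℕ)) i k)) := by
        rw [keyC, zero_add, Fin.cast_val_eq_self]
      have hconj : ∀ z, (Qaux step (r' + 1) i') ((Qaux step ((i' : ℕ)) 0) z)
          = (Qaux step ((i' : ℕ)) 0) ((Qaux step (r' + 1) 0) z) := by
        intro z
        have e1 := Qaux_add step ((i' : ℕ)) (r' + 1) 0
        have e2 := Qaux_add step (r' + 1) ((i' : ℕ)) 0
        rw [zero_add, Fin.cast_val_eq_self] at e1
        rw [zero_add, Fin.natCast_self] at e2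
        have e3 : (Qaux step ((i' : ℕ)) 0).trans (Qaux step (r' + 1) i')
            = (Qaux step (r' + 1) 0).trans (Qaux step ((i' : ℕ)) 0) := by
          rw [← e1, show (i' : ℕ) + (r' + 1) = (r' + 1) + (i' : ℕ) from Nat.add_comm _ _, e2]
        have e4 := congrArg (fun (e : Equiv.Perm (ZMod s)) => e z) e3
        simpa [Equiv.trans_apply] using e4
      obtain ⟨q, hq⟩ := hf (Qaux step ((r' + 1) - (i : ℕ)) i k)
        ((Qaux step ((i' : ℕ)) 0).symm k')
      rw [← hQ] at hq
      refine ⟨((r' + 1) * q + (i' : ℕ)) + ((r' + 1) - (i : ℕ)), ?_⟩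
      rw [pow_add, Equiv.Perm.mul_apply, h1, pow_add, Equiv.Perm.mul_apply, h2, keyCq]
      congr 1
      rw [conj_pow (Qaux step ((i' : ℕ)) 0) _ _ hconj q _, hq]
      exact (Qaux step ((i' : ℕ)) 0).apply_symm_apply k'
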